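/- Fix an n×n rational orthogonal matrix Q of the canonical form diag(Q_s, I_{n-s}), where Q_s has height at most h and no entries equal to ±1. Let A be the adjacency matrix of an Erdős–Rényi random graph G(n,p). Then Pr(Q^T A Q has all integer entries) ≤ p̂^{(s/(2h^4))·(s/(2h^4) + n - s - 1)}, where p̂ = max(p, 1-p). -/

import Mathlib

open MeasureTheory ENNReal Finset

/-! ### Rational number helpers -/

lemma sq_lower (q : ℚ) (h : ℕ) (hq : q ≠ 0) (hden : q.den ≤ h) :
    (1 : ℚ) / (h : ℚ)^2 ≤ q * q := by
  have hd0 : (0:ℚ) < (q.den : ℚ) := by exact_mod_cast q.den_pos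
  have hdh : (q.den : ℚ) ≤ (h : ℚ) := by exact_mod_cast hden
  have hh0 : (0:ℚ) < (h : ℚ) := lt_of_lt_of_le hd0 hdh
  have hnum : (1:ℚ) ≤ (q.num : ℚ) * (q.num : ℚ) := by
    have h0 : q.num ≠ 0 := Rat.num_ne_zero.2 hq
    have h1 : (1:ℤ) ≤ q.num * q.num := by
      rcases lt_or_gt_of_ne h0 with hlt | hgt <;> nlinarith
    exact_mod_cast h1
  have hqd : q * (q.den : ℚ) = (q.num : ℚ) := by
    have hden0 : (q.den : ℚ) ≠ 0 := ne_of_gt hd0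
    have hnd := Rat.num_div_den q
    rw [div_eq_iff hden0] at hnd
    linear_combination -hnd
  have h2 : q * q * ((q.den:ℚ) * (q.den:ℚ)) = (q.num:ℚ) * (q.num:ℚ) := by
    rw [show q * q * ((q.den:ℚ) * (q.den:ℚ)) = (q * (q.den:ℚ)) * (q * (q.den:ℚ)) from by ring,
      hqd]
  have h3 : (q.den:ℚ) * (q.den:ℚ) ≤ (h:ℚ)^2 := by
    rw [pow_two]; exact mul_le_mul hdh hdh hd0.le hh0.le
  have h4 : q * q * ((q.den:ℚ) * (q.den:ℚ)) ≤ q * q * (h:ℚ)^2 :=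
    mul_le_mul_of_nonneg_left h3 (mul_self_nonneg q)
  rw [div_le_iff₀ (by positivity)]
  linarith

lemma den_ne_one_of (q : ℚ) (h0 : q ≠ 0) (h1 : q * q < 1) : q.den ≠ 1 := by
  intro hden
  have hq : (q.num : ℚ) = q := (Rat.den_eq_one_iff q).1 hden
  have h2 : q.num ≠ 0 := Rat.num_ne_zero.2 h0
  have h3 : (1:ℤ) ≤ q.num * q.num := by
    rcases lt_or_gt_of_ne h2 with hlt | hgt <;> nlinarith
  have h4 : (1:ℚ) ≤ q * q := by
    rw [← hq]; exact_mod_cast h3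
  linarith

lemma den_ne_one_mul (q1 q2 : ℚ) (h1 : q1 ≠ 0) (h2 : q2 ≠ 0)
    (hs1 : q1 * q1 < 1) (hs2 : q2 * q2 < 1) : (q1 * q2).den ≠ 1 := by
  refine den_ne_one_of _ (mul_ne_zero h1 h2) ?_
  nlinarith [mul_self_nonneg q1, mul_self_nonneg q2]

lemma ne_int_of_den_ne_one (q : ℚ) (h : q.den ≠ 1) (z : ℤ) : q ≠ (z : ℚ) := by
  intro hq
  rw [hq] at h
  exact h (Rat.den_intCast z)

/-! ### Weighted counting core -/

section Core
variable {ι : Type*} [Fintype ι] [DecidableEq ι]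

def extAt (e0 : ι) (g : {j : ι // j ≠ e0} → Bool) (b : Bool) : ι → Bool :=
  fun j => if h : j = e0 then b else g ⟨j, h⟩

omit [Fintype ι] in
lemma extAt_update (e0 : ι) (g : {j : ι // j ≠ e0} → Bool) (b b' : Bool) :
    Function.update (extAt e0 g b') e0 b = extAt e0 g b := by
  funext j
  rcases eq_or_ne j e0 with rfl | h
  · simp [extAt]
  · simp [Function.update, h, extAt]

lemma prod_extAt (w : Bool → ℝ≥0∞) (e0 : ι) (g : {j : ι // j ≠ e0} → Bool) (b : Bool) :
    ∏ i, w (extAt e0 g b i) = w b * ∏ j : {j : ι // j ≠ e0}, w (g j) := by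
  rw [← Finset.mul_prod_erase Finset.univ _ (Finset.mem_univ e0),
    Finset.prod_subtype (Finset.univ.erase e0) (p := fun j => j ≠ e0) (by simp)
      (fun i => w (extAt e0 g b i))]
  congr 1
  · simp [extAt]
  · refine Finset.prod_congr rfl fun j _ => ?_
    simp [extAt, j.2]

lemma sum_split (e0 : ι) (f : (ι → Bool) → ℝ≥0∞) :
    ∑ ω : ι → Bool, f ω
      = ∑ g : {j : ι // j ≠ e0} → Bool, ∑ b : Bool, f (extAt e0 g b) := by
  rw [← Equiv.sum_comp (Equiv.piSplitAt e0 (fun _ => Bool)).symm f, Fintype.sum_prod_type,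
    Finset.sum_comm]
  refine Finset.sum_congr rfl fun g _ => Finset.sum_congr rfl fun b _ => ?_
  congr 1
  funext j
  by_cases h : j = e0
  · subst h; simp [extAt, Equiv.piSplitAt]
  · simp [extAt, Equiv.piSplitAt, h]

lemma step (w : Bool → ℝ≥0∞) (c : ℝ≥0∞) (hw : ∀ b, w b ≤ c)
    (hsum : w true + w false = 1) (e0 : ι) (A E : Set (ι → Bool))
    (hA : ∀ (ω : ι → Bool) (b), Function.update ω e0 b ∈ A ↔ ω ∈ A)
    (hE : ∀ ω : ι → Bool,
      ¬(Function.update ω e0 true ∈ E ∧ Function.update ω e0 false ∈ E)) :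
    (∑ ω : ι → Bool, (A ∩ E).indicator (fun ω' => ∏ i, w (ω' i)) ω)
      ≤ c * ∑ ω : ι → Bool, A.indicator (fun ω' => ∏ i, w (ω' i)) ω := by
  classical
  rw [sum_split e0, sum_split e0 (A.indicator fun ω' => ∏ i, w (ω' i)), Finset.mul_sum]
  refine Finset.sum_le_sum fun g _ => ?_
  have hAb : ∀ b, extAt e0 g b ∈ A ↔ extAt e0 g true ∈ A := fun b => by
    have h1 := hA (extAt e0 g b) true
    rw [extAt_update] at h1
    exact h1.symm
  by_cases hgA : extAt e0 g true ∈ A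
  · have hrhs : ∀ b, A.indicator (fun ω' => ∏ i, w (ω' i)) (extAt e0 g b)
        = w b * ∏ j : {j : ι // j ≠ e0}, w (g j) := fun b => by
      rw [Set.indicator_of_mem ((hAb b).2 hgA), prod_extAt]
    have hlhs : ∀ b, (A ∩ E).indicator (fun ω' => ∏ i, w (ω' i)) (extAt e0 g b)
        ≤ (if extAt e0 g b ∈ E then w b else 0) * ∏ j : {j : ι // j ≠ e0}, w (g j) := by
      intro b
      by_cases hbE : extAt e0 g b ∈ E
      · rw [Set.indicator_of_mem (Set.mem_inter ((hAb b).2 hgA) hbE), prod_extAt, if_pos hbE]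
      · rw [Set.indicator_of_notMem (fun hm => hbE hm.2), if_neg hbE, zero_mul]
    calc ∑ b : Bool, (A ∩ E).indicator (fun ω' => ∏ i, w (ω' i)) (extAt e0 g b)
        ≤ ∑ b : Bool, (if extAt e0 g b ∈ E then w b else 0)
            * ∏ j : {j : ι // j ≠ e0}, w (g j) := Finset.sum_le_sum fun b _ => hlhs b
      _ ≤ c * ∏ j : {j : ι // j ≠ e0}, w (g j) := by
          rw [Fintype.sum_bool, ← add_mul]
          have hnotboth := hE (extAt e0 g true)
          rw [extAt_update, extAt_update] at hnotboth
          refine mul_le_mul_left ?_ _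
          by_cases h1 : extAt e0 g true ∈ E
          · rw [if_pos h1, if_neg (fun h2 => hnotboth ⟨h1, h2⟩), add_zero]; exact hw true
          · rw [if_neg h1, zero_add]
            by_cases h2 : extAt e0 g false ∈ E
            · rw [if_pos h2]; exact hw false
            · rw [if_neg h2]; exact zero_le
      _ = c * ∑ b : Bool, A.indicator (fun ω' => ∏ i, w (ω' i)) (extAt e0 g b) := by
          simp only [hrhs, Fintype.sum_bool, ← add_mul, hsum, one_mul]
  · have h0 : ∀ b, (A ∩ E).indicator (fun ω' => ∏ i, w (ω' i)) (extAt e0 g b) = 0 :=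
      fun b => Set.indicator_of_notMem (fun hm => hgA ((hAb b).1 hm.1)) _
    simp [h0]

lemma core {T : Type*} [DecidableEq T] (w : Bool → ℝ≥0∞) (c : ℝ≥0∞)
    (hw : ∀ b, w b ≤ c) (hsum : w true + w false = 1)
    (ts : Finset T) (E : T → Set (ι → Bool)) (e : T → ι)
    (hflip : ∀ t ∈ ts, ∀ ω : ι → Bool,
      ¬(Function.update ω (e t) true ∈ E t ∧ Function.update ω (e t) false ∈ E t))
    (hinv : ∀ t ∈ ts, ∀ t' ∈ ts, t' ≠ t → ∀ (ω : ι → Bool) (b),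
      Function.update ω (e t) b ∈ E t' ↔ ω ∈ E t') :
    (∑ ω : ι → Bool, Set.indicator {ω' | ∀ t ∈ ts, ω' ∈ E t} (fun ω' => ∏ i, w (ω' i)) ω)
      ≤ c ^ ts.card * ∑ ω : ι → Bool, ∏ i, w (ω i) := by
  classical
  induction ts using Finset.induction with
  | empty =>
    have h : {ω' : ι → Bool | ∀ t ∈ (∅ : Finset T), ω' ∈ E t} = Set.univ := by
      ext ω'; simp
    simp [h]
  | @insert t0 ts ht0 ih =>
    have hstep := step w c hw hsum (e t0)
      {ω | ∀ t ∈ ts, ω ∈ E t} (E t0)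
      (fun ω b => by
        constructor
        · intro hm t ht
          exact (hinv t0 (Finset.mem_insert_self _ _) t
            (Finset.mem_insert_of_mem ht) (fun h => ht0 (h ▸ ht)) ω b).1 (hm t ht)
        · intro hm t ht
          exact (hinv t0 (Finset.mem_insert_self _ _) t
            (Finset.mem_insert_of_mem ht) (fun h => ht0 (h ▸ ht)) ω b).2 (hm t ht))
      (hflip t0 (Finset.mem_insert_self _ _))
    have hsame : {ω' : ι → Bool | ∀ t ∈ insert t0 ts, ω' ∈ E t}
        = {ω | ∀ t ∈ ts, ω ∈ E t} ∩ E t0 := by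
      ext ω
      simp only [Finset.mem_insert, Set.mem_inter_iff, Set.mem_setOf_eq]
      constructor
      · intro hm; exact ⟨fun t ht => hm t (Or.inr ht), hm t0 (Or.inl rfl)⟩
      · rintro ⟨h1, h2⟩ t (rfl | ht); exacts [h2, h1 t ht]
    rw [hsame]
    calc (∑ ω : ι → Bool,
          ({ω | ∀ t ∈ ts, ω ∈ E t} ∩ E t0).indicator (fun ω' => ∏ i, w (ω' i)) ω)
        ≤ c * ∑ ω : ι → Bool,
            Set.indicator {ω' | ∀ t ∈ ts, ω' ∈ E t} (fun ω' => ∏ i, w (ω' i)) ω := hstep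
      _ ≤ c * (c ^ ts.card * ∑ ω : ι → Bool, ∏ i, w (ω i)) := by
          refine mul_le_mul_right ?_ c
          exact ih (fun t ht => hflip t (Finset.mem_insert_of_mem ht))
            (fun t ht t' ht' => hinv t (Finset.mem_insert_of_mem ht) t'
              (Finset.mem_insert_of_mem ht'))
      _ = c ^ (insert t0 ts).card * ∑ ω : ι → Bool, ∏ i, w (ω i) := by
          rw [Finset.card_insert_of_notMem ht0, pow_succ]; ring
end Core

/-! ### Measure of a set in a finite product of Bernoulli measures -/

lemma measure_pi_singleton {ι : Type*} [Fintype ι] (ν : Measure Bool) [SigmaFinite ν]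
    (ω : ι → Bool) :
    Measure.pi (fun _ : ι => ν) {ω} = ∏ i, ν {ω i} := by
  rw [← Set.univ_pi_singleton ω, Measure.pi_pi]

lemma measure_pi_eq_sum {ι : Type*} [Fintype ι] [DecidableEq ι] (ν : Measure Bool)
    [SigmaFinite ν] (S : Set (ι → Bool)) :
    Measure.pi (fun _ : ι => ν) S
      = ∑ ω : ι → Bool, S.indicator (fun ω' => ∏ i, ν {ω' i}) ω := by
  classical
  set Ft := S.toFinite.toFinset with hFt
  have hS : S = ⋃ ω ∈ Ft, {ω} := by
    ext x; simp only [Set.mem_iUnion, Finset.mem_coe, Set.mem_singleton_iff, hFt,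
      Set.Finite.mem_toFinset, exists_prop, exists_eq_right']
  have h1 : Measure.pi (fun _ : ι => ν) S
      = ∑ ω ∈ Ft, Measure.pi (fun _ : ι => ν) {ω} := by
    conv_lhs => rw [hS]
    exact measure_biUnion_finset
      (fun x _ y hy hxy => by simp [Set.disjoint_singleton, hxy])
      (fun ω _ => measurableSet_singleton ω)
  rw [h1, Finset.sum_congr rfl (fun ω _ => measure_pi_singleton ν ω)]
  rw [← Finset.sum_subset (Finset.subset_univ Ft)
    (fun x _ hx => Set.indicator_of_notMem (fun hm => hx ((Set.Finite.mem_toFinset _).2 hm)) _)]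
  exact Finset.sum_congr rfl fun ω hω =>
    (Set.indicator_of_mem ((Set.Finite.mem_toFinset _).1 hω)
      (fun ω' => ∏ i, ν {ω' i})).symm

/-! ### Counting and greedy selection -/

lemma card_filter_le_sq (n h : ℕ) (f : Fin n → ℚ) (hh : 0 < h)
    (hsum : ∑ k, f k * f k = 1)
    (hlow : ∀ k, f k ≠ 0 → (1:ℚ)/(h:ℚ)^2 ≤ f k * f k) :
    (univ.filter (fun k => f k ≠ 0)).card ≤ h^2 := by
  classical
  set F := univ.filter (fun k => f k ≠ 0) with hF
  have h1 : (F.card : ℚ) * ((1:ℚ)/(h:ℚ)^2) ≤ ∑ k ∈ F, f k * f k := by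
    rw [← nsmul_eq_mul]
    exact Finset.card_nsmul_le_sum F _ _ (fun k hk => hlow k (mem_filter.1 hk).2)
  have h2 : ∑ k ∈ F, f k * f k ≤ 1 := by
    rw [← hsum]
    exact Finset.sum_le_sum_of_subset_of_nonneg (subset_univ F)
      (fun k _ _ => mul_self_nonneg (f k))
  have hh0 : (0:ℚ) < (h:ℚ)^2 := by positivity
  have h3 : (F.card : ℚ) ≤ (h:ℚ)^2 := by
    rw [div_eq_mul_inv, one_mul] at h1
    have hle := le_trans h1 h2
    calc (F.card : ℚ) = (F.card : ℚ) * ((h:ℚ)^2)⁻¹ * (h:ℚ)^2 := by field_simp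
      _ ≤ 1 * (h:ℚ)^2 := mul_le_mul_of_nonneg_right hle (le_of_lt hh0)
      _ = (h:ℚ)^2 := one_mul _
  exact_mod_cast h3

lemma greedy {n : ℕ} (S : Fin n → Finset (Fin n)) (B : ℕ) (P0 : Finset (Fin n))
    (hne : ∀ c ∈ P0, (S c).Nonempty)
    (hdeg : ∀ c ∈ P0, (P0.filter (fun c' => ¬ Disjoint (S c') (S c))).card ≤ B) :
    ∃ C : Finset (Fin n), C ⊆ P0 ∧
      (∀ c ∈ C, ∀ c' ∈ C, c ≠ c' → Disjoint (S c) (S c')) ∧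
      P0.card ≤ B * C.card := by
  classical
  suffices main : ∀ (k : ℕ) (P : Finset (Fin n)), P.card ≤ k → P ⊆ P0 →
      ∃ C : Finset (Fin n), C ⊆ P ∧
        (∀ c ∈ C, ∀ c' ∈ C, c ≠ c' → Disjoint (S c) (S c')) ∧
        P.card ≤ B * C.card by
    obtain ⟨C, h1, h2, h3⟩ := main P0.card P0 le_rfl (Finset.Subset.refl _)
    exact ⟨C, h1, h2, h3⟩
  intro k
  induction k with
  | zero =>
    intro P hPk _
    refine ⟨∅, Finset.empty_subset _, by simp, ?_⟩
    simp [Nat.le_zero.1 hPk]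
  | succ k ih =>
    intro P hPk hP0
    rcases P.eq_empty_or_nonempty with rfl | ⟨c, hc⟩
    · exact ⟨∅, Finset.Subset.refl _, by simp, by simp⟩
    · set P' := P.filter (fun c' => Disjoint (S c') (S c)) with hP'
      have hcP' : c ∉ P' := by
        simp only [hP', mem_filter, not_and]
        intro _ hcon
        obtain ⟨x, hx⟩ := hne c (hP0 hc)
        exact Finset.disjoint_left.1 hcon hx hx
      have hP'sub : P' ⊆ P := Finset.filter_subset _ _
      have hP'card : P'.card ≤ k := by
        have hss : P' ⊂ P := Finset.ssubset_iff_of_subset hP'sub |>.2 ⟨c, hc, hcP'⟩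
        have := Finset.card_lt_card hss
        omega
      obtain ⟨C', hC'sub, hC'disj, hC'card⟩ := ih P' hP'card (hP'sub.trans hP0)
      have hcC' : c ∉ C' := fun hmm => hcP' (hC'sub hmm)
      refine ⟨insert c C', ?_, ?_, ?_⟩
      · intro x hx
        rcases Finset.mem_insert.1 hx with rfl | hx
        · exact hc
        · exact hP'sub (hC'sub hx)
      · have key : ∀ x ∈ C', Disjoint (S x) (S c) := fun x hx => (mem_filter.1 (hC'sub hx)).2
        intro x hx y hy hxy
        rcases Finset.mem_insert.1 hx with hxc | hx' <;>
          rcases Finset.mem_insert.1 hy with hyc | hy'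
        · exact absurd (hxc.trans hyc.symm) hxy
        · rw [hxc]; exact (key y hy').symm
        · rw [hyc]; exact key x hx'
        · exact hC'disj x hx' y hy' hxy
      · have hsplit : P.card ≤ P'.card + (P.filter (fun c' => ¬ Disjoint (S c') (S c))).card := by
          rw [hP']
          rw [Finset.card_filter_add_card_filter_not (s := P)
            (p := fun c' => Disjoint (S c') (S c))]
        have hR : (P.filter (fun c' => ¬ Disjoint (S c') (S c))).card ≤ B := by
          refine le_trans (Finset.card_le_card ?_) (hdeg c (hP0 hc))
          exact Finset.filter_subset_filter _ hP0
        rw [Finset.card_insert_of_notMem hcC', Nat.mul_succ]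
        omega

/-! ### Matrix entries under a single edge flip -/

/-- The adjacency matrix of the graph on `Fin n` whose edges are the pairs
`i < j` with `ω ⟨(i,j), _⟩ = true`. -/
def adjMat (n : ℕ) (ω : {e : Fin n × Fin n // e.1 < e.2} → Bool) :
    Matrix (Fin n) (Fin n) ℚ := fun i j =>
  if hij : i < j then (if ω ⟨(i, j), hij⟩ then 1 else 0)
  else if hji : j < i then (if ω ⟨(j, i), hji⟩ then 1 else 0) else 0

lemma adjMat_update_apply (n : ℕ) (ω : {e : Fin n × Fin n // e.1 < e.2} → Bool)
    (e : {e : Fin n × Fin n // e.1 < e.2}) (b : Bool) (i j : Fin n) :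
    adjMat n (Function.update ω e b) i j
      = adjMat n ω i j + ((if b then (1:ℚ) else 0) - (if ω e then 1 else 0)) *
          ((if i = e.1.1 ∧ j = e.1.2 then 1 else 0)
            + (if i = e.1.2 ∧ j = e.1.1 then 1 else 0)) := by
  classical
  obtain ⟨⟨u, v⟩, huv⟩ := e
  simp only at huv
  simp only [adjMat]
  rcases lt_trichotomy i j with hij | rfl | hji
  · rw [dif_pos hij, dif_pos hij, Function.update_apply]
    have hb : ((⟨(i,j), hij⟩ : {e : Fin n × Fin n // e.1 < e.2}) = ⟨(u,v), huv⟩)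
        ↔ (i = u ∧ j = v) := by simp
    rw [if_congr hb rfl rfl]
    by_cases hP : i = u ∧ j = v
    · obtain ⟨rfl, rfl⟩ := hP
      rw [if_pos (⟨rfl, rfl⟩ : i = i ∧ j = j), if_pos (⟨rfl, rfl⟩ : i = i ∧ j = j),
        if_neg (fun h : i = j ∧ j = i => by rw [h.1] at hij; exact lt_irrefl _ hij)]
      cases b <;> rcases hw : ω ⟨(i,j), hij⟩ <;>
        simp [hw, proof_irrel huv hij]
    · rw [if_neg hP, if_neg hP,
        if_neg (fun h : i = v ∧ j = u => by rw [h.1, h.2] at hij; exact absurd hij (asymm huv))]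
      ring
  · repeat rw [dif_neg (lt_irrefl i)]
    rw [if_neg (fun h : i = u ∧ i = v => by rw [← h.1, ← h.2] at huv; exact lt_irrefl _ huv),
      if_neg (fun h : i = v ∧ i = u => by rw [← h.2, ← h.1] at huv; exact lt_irrefl _ huv)]
    ring
  · rw [dif_neg (asymm hji), dif_neg (asymm hji), dif_pos hji, dif_pos hji,
      Function.update_apply]
    have hb : ((⟨(j,i), hji⟩ : {e : Fin n × Fin n // e.1 < e.2}) = ⟨(u,v), huv⟩)
        ↔ (j = u ∧ i = v) := by simp
    rw [if_congr hb rfl rfl]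
    by_cases hP : j = u ∧ i = v
    · obtain ⟨rfl, rfl⟩ := hP
      rw [if_pos (⟨rfl, rfl⟩ : j = j ∧ i = i), if_pos (⟨rfl, rfl⟩ : i = i ∧ j = j),
        if_neg (fun h : i = j ∧ j = i => by rw [h.1] at hji; exact lt_irrefl _ hji)]
      cases b <;> rcases hw : ω ⟨(j,i), hji⟩ <;>
        simp [hw, proof_irrel huv hji]
    · rw [if_neg hP, if_neg (fun h : i = v ∧ j = u => hP ⟨h.2, h.1⟩),
        if_neg (fun h : i = u ∧ j = v => by rw [h.1, h.2] at hji; exact absurd hji (asymm huv))]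
      ring

lemma entry_update (n : ℕ) (Q : Matrix (Fin n) (Fin n) ℚ)
    (ω : {e : Fin n × Fin n // e.1 < e.2} → Bool)
    (e : {e : Fin n × Fin n // e.1 < e.2}) (b : Bool) (i j : Fin n) :
    (Q.transpose * adjMat n (Function.update ω e b) * Q) i j
      = (Q.transpose * adjMat n ω * Q) i j
        + ((if b then (1:ℚ) else 0) - (if ω e then 1 else 0)) *
            (Q e.1.1 i * Q e.1.2 j + Q e.1.2 i * Q e.1.1 j) := by
  classical
  simp only [Matrix.mul_apply, Matrix.transpose_apply]
  simp only [adjMat_update_apply n ω e b]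
  simp only [mul_add, Finset.sum_add_distrib, add_mul, ite_and, mul_ite, ite_mul,
    zero_mul, mul_zero, mul_one, Finset.sum_ite_eq, Finset.sum_ite_eq',
    Finset.mem_univ, if_true]
  ring


/-- For a fixed rational orthogonal matrix Q in canonical form diag(Q_s, I_{n-s}),
with Q_s of height at most h and no entries ±1, and A the adjacency matrix of
G(n,p), we have Pr(Qᵀ A Q integral) ≤ p̂^{(s/(2h⁴))·(s/(2h⁴)+n-s-1)}. -/
theorem stmt_14 (n s h : ℕ) (hs : s ≤ n) (p : ℝ) (hp0 : 0 < p) (hp1 : p < 1)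
    (Q : Matrix (Fin n) (Fin n) ℚ)
    (hQ : Q.transpose * Q = 1)
    (hblock : ∀ i j : Fin n, s ≤ (i : ℕ) ∨ s ≤ (j : ℕ) →
      Q i j = if i = j then 1 else 0)
    (hheight : ∀ i j : Fin n, (i : ℕ) < s → (j : ℕ) < s → (Q i j).den ≤ h)
    (hno1 : ∀ i j : Fin n, (i : ℕ) < s → (j : ℕ) < s →
      Q i j ≠ 1 ∧ Q i j ≠ -1) :
    (Measure.pi fun _ : {e : Fin n × Fin n // e.1 < e.2} =>
        (PMF.bernoulli (Real.toNNReal p)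
          (Real.toNNReal_le_one.mpr hp1.le)).toMeasure)
      {ω | ∀ i j : Fin n, ∃ z : ℤ,
        (Q.transpose * adjMat n ω * Q) i j = (z : ℚ)}
      ≤ ENNReal.ofReal (max p (1 - p)) ^
          (((s : ℝ) / (2 * (h : ℝ) ^ 4)) *
            ((s : ℝ) / (2 * (h : ℝ) ^ 4) + (n : ℝ) - (s : ℝ) - 1)) := by
  classical
  set ν : Measure Bool := (PMF.bernoulli (Real.toNNReal p)
    (Real.toNNReal_le_one.mpr hp1.le)).toMeasure with hνdef
  set c : ℝ≥0∞ := ENNReal.ofReal (max p (1 - p)) with hcdef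
  set m : ℝ := (s : ℝ) / (2 * (h : ℝ) ^ 4) with hmdef
  have hc1 : c ≤ 1 := by
    rw [hcdef]
    exact ENNReal.ofReal_le_one.mpr (max_le hp1.le (by linarith))
  have hprob : IsProbabilityMeasure (Measure.pi
      fun _ : {e : Fin n × Fin n // e.1 < e.2} => ν) := by infer_instance
  by_cases hEpos : 0 < m * (m + (n:ℝ) - (s:ℝ) - 1)
  swap
  · push_neg at hEpos
    calc (Measure.pi fun _ : {e : Fin n × Fin n // e.1 < e.2} => ν)
          {ω | ∀ i j : Fin n, ∃ z : ℤ, (Q.transpose * adjMat n ω * Q) i j = (z : ℚ)}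
        ≤ 1 := prob_le_one
      _ = c ^ (0:ℝ) := (ENNReal.rpow_zero (x := c)).symm
      _ ≤ c ^ (m * (m + (n:ℝ) - (s:ℝ) - 1)) :=
          ENNReal.rpow_le_rpow_of_exponent_ge hc1 hEpos
  -- main case
  have hm0 : 0 < m := by
    rcases le_or_gt m 0 with hm | hm
    · exfalso
      have hmz : m = 0 := le_antisymm hm (by rw [hmdef]; positivity)
      rw [hmz] at hEpos; simp at hEpos
    · exact hm
  have hs1 : 1 ≤ s := by
    by_contra hcon
    have : s = 0 := by omega
    rw [hmdef, this] at hm0; simp at hm0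
  have hh1 : 1 ≤ h := by
    by_contra hcon
    have : h = 0 := by omega
    rw [hmdef, this] at hm0; norm_num at hm0
  have hfac2 : 0 < m + (n:ℝ) - (s:ℝ) - 1 := by
    by_contra hcon
    push_neg at hcon
    nlinarith
  -- column and row norms
  have hcolnorm : ∀ i : Fin n, ∑ k, Q k i * Q k i = 1 := by
    intro i
    have hentry := Matrix.ext_iff.2 hQ i i
    simpa [Matrix.mul_apply, Matrix.transpose_apply, Matrix.one_apply_eq] using hentry
  have hrownorm : ∀ k : Fin n, ∑ i, Q k i * Q k i = 1 := by
    intro k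
    have hQQ : Q * Q.transpose = 1 := mul_eq_one_comm.mp hQ
    have hentry := Matrix.ext_iff.2 hQQ k k
    simpa [Matrix.mul_apply, Matrix.transpose_apply, Matrix.one_apply_eq] using hentry
  have hsqle : ∀ k i : Fin n, Q k i * Q k i ≤ 1 := by
    intro k i
    rw [← hcolnorm i]
    exact Finset.single_le_sum (fun k' _ => mul_self_nonneg (Q k' i)) (mem_univ k)
  have habs : ∀ k i : Fin n, (k:ℕ) < s → (i:ℕ) < s → Q k i * Q k i < 1 := by
    intro k i hk hi
    rcases lt_or_eq_of_le (hsqle k i) with hlt | heq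
    · exact hlt
    · exfalso
      rcases mul_self_eq_one_iff.1 heq with h1 | h1
      · exact (hno1 k i hk hi).1 h1
      · exact (hno1 k i hk hi).2 h1
  have hzero1 : ∀ k i : Fin n, (i:ℕ) < s → s ≤ (k:ℕ) → Q k i = 0 := by
    intro k i hi hk
    rw [hblock k i (Or.inl hk), if_neg (fun hh : k = i => by rw [hh] at hk; omega)]
  have hzero2 : ∀ k i : Fin n, (k:ℕ) < s → s ≤ (i:ℕ) → Q k i = 0 := by
    intro k i hk hi
    rw [hblock k i (Or.inr hi), if_neg (fun hh : k = i => by rw [hh] at hk; omega)]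
  -- h ≥ 2
  have hh2 : 2 ≤ h := by
    by_contra hcon
    have hh1' : h = 1 := by omega
    have hn0 : 0 < n := by omega
    set i0 : Fin n := ⟨0, hn0⟩ with hi0
    have hi0s : (i0:ℕ) < s := by rw [hi0]; exact hs1
    have hall : ∀ k : Fin n, Q k i0 = 0 := by
      intro k
      rcases lt_or_ge (k:ℕ) s with hk | hk
      · by_contra hq0
        exact den_ne_one_of _ hq0 (habs k i0 hk hi0s)
          (by
            have h1 := hheight k i0 hk hi0s
            have h2 := (Q k i0).den_pos
            omega)
      · exact hzero1 k i0 hi0s hk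
    have := hcolnorm i0
    rw [Finset.sum_congr rfl (fun k _ => by rw [hall k, mul_zero])] at this
    simp at this
  -- supports
  set SS : Fin n → Finset (Fin n) := fun cc => univ.filter (fun k => Q k cc ≠ 0) with hSS
  -- noninteger entries in each column
  have hk0ex : ∀ i : Fin n, ∃ k : Fin n, (i:ℕ) < s → (((k:ℕ) < s) ∧ (Q k i).den ≠ 1) := by
    intro i
    by_cases hi : (i:ℕ) < s
    · by_contra hcon
      push_neg at hcon
      have hall : ∀ k : Fin n, Q k i = 0 := by
        intro k
        rcases lt_or_ge (k:ℕ) s with hk | hk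
        · by_contra hq0
          exact den_ne_one_of _ hq0 (habs k i hk hi) ((hcon k).2 hk)
        · exact hzero1 k i hi hk
      have hcn := hcolnorm i
      rw [Finset.sum_congr rfl (fun k _ => by rw [hall k, mul_zero])] at hcn
      simp at hcn
    · exact ⟨i, fun hcon => absurd hcon hi⟩
  choose k0 hk0 using hk0ex
  have hk0den : ∀ i : Fin n, (i:ℕ) < s → (Q (k0 i) i).den ≠ 1 := fun i hi => (hk0 i hi).2
  have hk0lt : ∀ i : Fin n, (i:ℕ) < s → ((k0 i : ℕ) < s) := fun i hi => (hk0 i hi).1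
  have hk0ne : ∀ i : Fin n, (i:ℕ) < s → Q (k0 i) i ≠ 0 := by
    intro i hi hq
    exact hk0den i hi (by rw [hq]; rfl)
  have hk0S : ∀ i : Fin n, (i:ℕ) < s → k0 i ∈ SS i := by
    intro i hi
    rw [hSS]
    exact mem_filter.2 ⟨mem_univ _, hk0ne i hi⟩
  -- column support sizes
  have hScard : ∀ cc : Fin n, (cc:ℕ) < s → (SS cc).card ≤ h^2 := by
    intro cc hcc
    refine card_filter_le_sq n h (fun k => Q k cc) (by omega) (hcolnorm cc) ?_
    intro k hk
    rcases lt_or_ge (k:ℕ) s with hks | hks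
    · exact sq_lower _ h hk (hheight k cc hks hcc)
    · exact absurd (hzero1 k cc hcc hks) hk
  have hRow : ∀ k : Fin n, (k:ℕ) < s → (univ.filter (fun cc => Q k cc ≠ 0)).card ≤ h^2 := by
    intro k hk
    refine card_filter_le_sq n h (fun cc => Q k cc) (by omega) (hrownorm k) ?_
    intro cc hcc
    rcases lt_or_ge (cc:ℕ) s with hcs | hcs
    · exact sq_lower _ h hcc (hheight k cc hk hcs)
    · exact absurd (hzero2 k cc hk hcs) hcc
  -- the candidate columns
  set P0 : Finset (Fin n) := univ.filter (fun cc : Fin n => (cc:ℕ) < s) with hP0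
  have hP0card : P0.card = s := by
    have himg : P0 = (univ : Finset (Fin s)).image (Fin.castLE hs) := by
      ext cc
      simp only [hP0, mem_filter, mem_univ, true_and, Finset.mem_image]
      constructor
      · intro hcc
        exact ⟨⟨(cc:ℕ), hcc⟩, by ext; simp [Fin.castLE]⟩
      · rintro ⟨a, rfl⟩
        simpa [Fin.castLE] using a.2
    rw [himg, Finset.card_image_of_injective _ (Fin.castLE_injective hs), card_univ,
      Fintype.card_fin]
  have hdeg : ∀ cc ∈ P0, (P0.filter (fun c' => ¬ Disjoint (SS c') (SS cc))).card
      ≤ h^2 * h^2 := by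
    intro cc hcc
    have hccs : (cc:ℕ) < s := (mem_filter.1 hcc).2
    have hsub : P0.filter (fun c' => ¬ Disjoint (SS c') (SS cc))
        ⊆ (SS cc).biUnion (fun k => univ.filter (fun c' => Q k c' ≠ 0)) := by
      intro c' hc'
      obtain ⟨-, hnd⟩ := mem_filter.1 hc'
      obtain ⟨k, hk1, hk2⟩ := Finset.not_disjoint_iff.1 hnd
      refine Finset.mem_biUnion.2 ⟨k, hk2, mem_filter.2 ⟨mem_univ _, ?_⟩⟩
      exact (mem_filter.1 hk1).2
    calc (P0.filter (fun c' => ¬ Disjoint (SS c') (SS cc))).card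
        ≤ ((SS cc).biUnion (fun k => univ.filter (fun c' => Q k c' ≠ 0))).card :=
          Finset.card_le_card hsub
      _ ≤ ∑ k ∈ SS cc, (univ.filter (fun c' => Q k c' ≠ 0)).card :=
          Finset.card_biUnion_le
      _ ≤ ∑ _k ∈ SS cc, h^2 := by
          refine Finset.sum_le_sum fun k hk => ?_
          have hkne : Q k cc ≠ 0 := (mem_filter.1 hk).2
          have hks : (k:ℕ) < s := by
            by_contra hcon
            exact hkne (hzero1 k cc hccs (by omega))
          exact hRow k hks
      _ = (SS cc).card * h^2 := by rw [Finset.sum_const, smul_eq_mul]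
      _ ≤ h^2 * h^2 := Nat.mul_le_mul_right _ (hScard cc hccs)
  obtain ⟨C, hCsub, hCdisj, hCcard⟩ := greedy SS (h^2*h^2) P0
    (fun cc hcc => ⟨k0 cc, hk0S cc (mem_filter.1 hcc).2⟩) hdeg
  have hCs : ∀ cc ∈ C, (cc:ℕ) < s := fun cc hcc => (mem_filter.1 (hCsub hcc)).2
  have hcross : ∀ cc ∈ C, ∀ cc' ∈ C, cc ≠ cc' → Q (k0 cc) cc' = 0 := by
    intro cc hcc cc' hcc' hne
    by_contra hq
    have h1 : k0 cc ∈ SS cc' := mem_filter.2 ⟨mem_univ _, hq⟩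
    have h2 : k0 cc ∈ SS cc := hk0S cc (hCs cc hcc)
    exact Finset.disjoint_left.1 (hCdisj cc hcc cc' hcc' hne) h2 h1
  -- numeric setup
  have hhR : (2:ℝ) ≤ (h:ℝ) := by exact_mod_cast hh2
  have hh4 : (0:ℝ) < (h:ℝ)^4 := by positivity
  have hn2 : 2 ≤ n := by
    by_contra hcon
    have hsn : s = 1 ∧ n = 1 := by omega
    obtain ⟨hs', hn'⟩ := hsn
    have hmval : m = 1 / (2 * (h:ℝ)^4) := by rw [hmdef, hs']; norm_num
    have hmle : m ≤ 1/32 := by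
      rw [hmval]
      rw [div_le_div_iff₀ (by positivity) (by norm_num)]
      nlinarith [pow_le_pow_left₀ (by norm_num : (0:ℝ) ≤ 2) hhR 4]
    rw [hs', hn'] at hfac2
    push_cast at hfac2
    linarith
  have hCcR : 2 * m ≤ (C.card : ℝ) := by
    have h1 : (s:ℝ) ≤ (h:ℝ)^2 * (h:ℝ)^2 * (C.card:ℝ) := by
      rw [hP0card] at hCcard
      exact_mod_cast hCcard
    have hms : m * (2*(h:ℝ)^4) = s := by rw [hmdef]; field_simp
    nlinarith [h1, hms, hh4]
  set a : ℕ := ⌈m⌉₊ with hadef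
  have ha1 : 1 ≤ a := Nat.one_le_iff_ne_zero.2 (by
    intro h0
    rw [hadef] at h0
    have := Nat.ceil_eq_zero.1 h0
    linarith)
  have hma : m ≤ (a:ℝ) := Nat.le_ceil m
  have h2a : 2 * a ≤ C.card + 1 := by
    have hr1 : (a:ℝ) < m + 1 := Nat.ceil_lt_add_one hm0.le
    have hr2 : (2*a : ℝ) < (C.card:ℝ) + 2 := by push_cast; linarith
    have : (2*a : ℕ) < C.card + 2 := by exact_mod_cast hr2
    omega
  have haC : a ≤ C.card := by omega
  obtain ⟨I, hIsub, hIcard⟩ := Finset.exists_subset_card_eq haC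
  have hdiffcard : a - 1 ≤ (C \ I).card := by
    rw [Finset.card_sdiff_of_subset hIsub, hIcard]; omega
  obtain ⟨Jb, hJbsub, hJbcard⟩ := Finset.exists_subset_card_eq hdiffcard
  set Jt : Finset (Fin n) := univ.filter (fun j : Fin n => ¬ (j:ℕ) < s) with hJt
  have hJtcard : Jt.card = n - s := by
    have hsplit := Finset.card_filter_add_card_filter_not
      (s := (univ : Finset (Fin n))) (p := fun j : Fin n => (j:ℕ) < s)
    rw [card_univ, Fintype.card_fin] at hsplit
    have h2 : P0.card + Jt.card = n := by
      rw [hP0, hJt]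
      convert hsplit using 3
    omega
  have hJbC : Jb ⊆ C := hJbsub.trans (Finset.sdiff_subset)
  have hIC : I ⊆ C := hIsub
  have hJbs : ∀ j ∈ Jb, (j:ℕ) < s := fun j hj => hCs j (hJbC hj)
  have hIs : ∀ i ∈ I, (i:ℕ) < s := fun i hi => hCs i (hIC hi)
  have hJts : ∀ j ∈ Jt, ¬ (j:ℕ) < s := fun j hj => (mem_filter.1 hj).2
  have hdisjJbJt : Disjoint Jb Jt := by
    rw [Finset.disjoint_left]
    intro x hx hx'
    exact hJts x hx' (hJbs x hx)
  set J : Finset (Fin n) := Jb ∪ Jt with hJdef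
  have hJcard : J.card = (a - 1) + (n - s) := by
    rw [hJdef, Finset.card_union_of_disjoint hdisjJbJt, hJbcard, hJtcard]
  have hIJdisj : Disjoint I J := by
    rw [hJdef, Finset.disjoint_union_right]
    constructor
    · exact (Finset.disjoint_of_subset_left hJbsub Finset.sdiff_disjoint).symm
    · rw [Finset.disjoint_left]
      intro x hx hx'
      exact hJts x hx' (hIs x hx)
  set ts : Finset (Fin n × Fin n) := I ×ˢ J with hts
  have htscard : ts.card = a * ((a-1) + (n-s)) := by
    rw [hts, Finset.card_product, hIcard, hJcard]
  -- designated coordinates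
  have h0n : 0 < n := by omega
  have h1n : 1 < n := by omega
  set dflt : {e : Fin n × Fin n // e.1 < e.2} :=
    ⟨(⟨0, h0n⟩, ⟨1, h1n⟩), Fin.mk_lt_mk.mpr one_pos⟩ with hdflt
  set rr : Fin n → Fin n := fun j => if (j:ℕ) < s then k0 j else j with hrr
  set er : Fin n × Fin n → {e : Fin n × Fin n // e.1 < e.2} := fun t =>
    if (t.2 : ℕ) < s then
      (if hlt : k0 t.1 < k0 t.2 then ⟨(k0 t.1, k0 t.2), hlt⟩
       else if hgt : k0 t.2 < k0 t.1 then ⟨(k0 t.2, k0 t.1), hgt⟩ else dflt)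
    else (if hlt : k0 t.1 < t.2 then ⟨(k0 t.1, t.2), hlt⟩ else dflt) with her
  set EV : Fin n × Fin n → Set ({e : Fin n × Fin n // e.1 < e.2} → Bool) := fun t =>
    {ω | ∃ z : ℤ, (Q.transpose * adjMat n ω * Q) t.1 t.2 = (z:ℚ)} with hEV
  -- membership facts
  have htsmem : ∀ t ∈ ts, t.1 ∈ I ∧ t.2 ∈ J := by
    intro t ht
    rw [hts] at ht
    exact Finset.mem_product.1 ht
  have hJcase : ∀ j ∈ J, (j ∈ Jb ∧ (j:ℕ) < s) ∨ (j ∈ Jt ∧ s ≤ (j:ℕ)) := by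
    intro j hj
    rcases Finset.mem_union.1 hj with hjb | hjt
    · exact Or.inl ⟨hjb, hJbs j hjb⟩
    · exact Or.inr ⟨hjt, le_of_not_gt (hJts j hjt)⟩
  have hIneJ : ∀ i ∈ I, ∀ j ∈ J, i ≠ j := by
    intro i hi j hj hij
    exact Finset.disjoint_left.1 hIJdisj hi (hij ▸ hj)
  -- structure of er on ts
  have het : ∀ t ∈ ts, ((er t).1.1 = k0 t.1 ∧ (er t).1.2 = rr t.2)
      ∨ ((er t).1.1 = rr t.2 ∧ (er t).1.2 = k0 t.1) := by
    intro t ht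
    obtain ⟨hiI, hjJ⟩ := htsmem t ht
    have hij := hIneJ t.1 hiI t.2 hjJ
    rcases hJcase t.2 hjJ with ⟨hjb, hjs⟩ | ⟨hjt, hjs⟩
    · -- block case
      have hiC : t.1 ∈ C := hIC hiI
      have hjC : t.2 ∈ C := hJbC hjb
      have hk0ij : k0 t.1 ≠ k0 t.2 := by
        intro hk
        have h1 : k0 t.1 ∈ SS t.1 := hk0S t.1 (hIs t.1 hiI)
        have h2 : k0 t.1 ∈ SS t.2 := hk ▸ hk0S t.2 (hJbs t.2 hjb)
        exact Finset.disjoint_left.1 (hCdisj t.1 hiC t.2 hjC hij) h1 h2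
      have hrrj : rr t.2 = k0 t.2 := by rw [hrr]; simp only; rw [if_pos hjs]
      rw [her]
      simp only
      rw [if_pos hjs, hrrj]
      rcases lt_trichotomy (k0 t.1) (k0 t.2) with hlt | heq | hgt
      · rw [dif_pos hlt]
        left; exact ⟨rfl, rfl⟩
      · exact absurd heq hk0ij
      · rw [dif_neg (asymm hgt), dif_pos hgt]
        right; exact ⟨rfl, rfl⟩
    · -- tail case
      have hk0j : k0 t.1 < t.2 := by
        have h1 : (k0 t.1 : ℕ) < s := hk0lt t.1 (hIs t.1 hiI)
        exact Fin.lt_def.mpr (by omega)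
      have hrrj : rr t.2 = t.2 := by rw [hrr]; simp only; rw [if_neg (by omega)]
      rw [her]
      simp only
      rw [if_neg (by omega), dif_pos hk0j, hrrj]
      left; exact ⟨rfl, rfl⟩
  -- coefficient facts (core, with (u,v) = (k0 i, rr j))
  have hkey1core : ∀ t ∈ ts,
      (Q (k0 t.1) t.1 * Q (rr t.2) t.2 + Q (rr t.2) t.1 * Q (k0 t.1) t.2).den ≠ 1 := by
    intro t ht
    obtain ⟨hiI, hjJ⟩ := htsmem t ht
    have hij := hIneJ t.1 hiI t.2 hjJ
    have his : (t.1 : ℕ) < s := hIs t.1 hiI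
    have hiC : t.1 ∈ C := hIC hiI
    rcases hJcase t.2 hjJ with ⟨hjb, hjs⟩ | ⟨hjt, hjs⟩
    · have hjC : t.2 ∈ C := hJbC hjb
      have hrrj : rr t.2 = k0 t.2 := by rw [hrr]; simp only; rw [if_pos hjs]
      have hz1 : Q (k0 t.2) t.1 = 0 := hcross t.2 hjC t.1 hiC (Ne.symm hij)
      have hz2 : Q (k0 t.1) t.2 = 0 := hcross t.1 hiC t.2 hjC hij
      have hexpr : Q (k0 t.1) t.1 * Q (rr t.2) t.2 + Q (rr t.2) t.1 * Q (k0 t.1) t.2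
          = Q (k0 t.1) t.1 * Q (k0 t.2) t.2 := by
        rw [hrrj, hz1, hz2]; ring
      rw [hexpr]
      exact den_ne_one_mul _ _ (hk0ne t.1 his) (hk0ne t.2 hjs)
        (habs _ _ (hk0lt t.1 his) his) (habs _ _ (hk0lt t.2 hjs) hjs)
    · have hrrj : rr t.2 = t.2 := by rw [hrr]; simp only; rw [if_neg (by omega)]
      have hQjj : Q t.2 t.2 = 1 := by rw [hblock t.2 t.2 (Or.inl hjs), if_pos rfl]
      have hz1 : Q t.2 t.1 = 0 := by
        rw [hblock t.2 t.1 (Or.inl hjs), if_neg (Ne.symm hij)]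
      have hz2 : Q (k0 t.1) t.2 = 0 := hzero2 _ _ (hk0lt t.1 his) hjs
      have hexpr : Q (k0 t.1) t.1 * Q (rr t.2) t.2 + Q (rr t.2) t.1 * Q (k0 t.1) t.2
          = Q (k0 t.1) t.1 := by
        rw [hrrj, hQjj, hz1, hz2]; ring
      rw [hexpr]
      exact hk0den t.1 his
  have hkey2core : ∀ t ∈ ts, ∀ t' ∈ ts, t' ≠ t →
      Q (k0 t.1) t'.1 * Q (rr t.2) t'.2 + Q (rr t.2) t'.1 * Q (k0 t.1) t'.2 = 0 := by
    intro t ht t' ht' htne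
    obtain ⟨hiI, hjJ⟩ := htsmem t ht
    obtain ⟨hiI', hjJ'⟩ := htsmem t' ht'
    have his : (t.1 : ℕ) < s := hIs t.1 hiI
    have hiC : t.1 ∈ C := hIC hiI
    have hiC' : t'.1 ∈ C := hIC hiI'
    -- second summand: Q (k0 t.1) t'.2 = 0 always
    have hterm2 : Q (k0 t.1) t'.2 = 0 := by
      rcases hJcase t'.2 hjJ' with ⟨hjb', hjs'⟩ | ⟨hjt', hjs'⟩
      · exact hcross t.1 hiC t'.2 (hJbC hjb') (hIneJ t.1 hiI t'.2 hjJ')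
      · exact hzero2 _ _ (hk0lt t.1 his) hjs'
    by_cases hii' : t'.1 = t.1
    · -- same first coordinate, so t'.2 ≠ t.2
      have hjj' : t'.2 ≠ t.2 := by
        intro hj2
        exact htne (Prod.ext hii' hj2)
      have hterm1 : Q (rr t.2) t'.2 = 0 := by
        rcases hJcase t.2 hjJ with ⟨hjb, hjs⟩ | ⟨hjt, hjs⟩
        · have hrrj : rr t.2 = k0 t.2 := by rw [hrr]; simp only; rw [if_pos hjs]
          rw [hrrj]
          rcases hJcase t'.2 hjJ' with ⟨hjb', hjs'⟩ | ⟨hjt', hjs'⟩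
          · exact hcross t.2 (hJbC hjb) t'.2 (hJbC hjb') (Ne.symm hjj')
          · exact hzero2 _ _ (hk0lt t.2 hjs) hjs'
        · have hrrj : rr t.2 = t.2 := by rw [hrr]; simp only; rw [if_neg (by omega)]
          rw [hrrj, hblock t.2 t'.2 (Or.inl hjs), if_neg (fun hh => hjj' hh.symm)]
      rw [hterm1, hterm2]; ring
    · -- different first coordinates
      have hz : Q (k0 t.1) t'.1 = 0 := hcross t.1 hiC t'.1 hiC' (fun hh => hii' hh.symm)
      rw [hz, hterm2]; ring
  -- full coefficient facts via het
  have hkey1 : ∀ t ∈ ts,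
      (Q (er t).1.1 t.1 * Q (er t).1.2 t.2 + Q (er t).1.2 t.1 * Q (er t).1.1 t.2).den ≠ 1 := by
    intro t ht
    rcases het t ht with ⟨h1, h2⟩ | ⟨h1, h2⟩ <;> rw [h1, h2]
    · exact hkey1core t ht
    · rw [add_comm]; exact hkey1core t ht
  have hkey2 : ∀ t ∈ ts, ∀ t' ∈ ts, t' ≠ t →
      Q (er t).1.1 t'.1 * Q (er t).1.2 t'.2 + Q (er t).1.2 t'.1 * Q (er t).1.1 t'.2 = 0 := by
    intro t ht t' ht' htne
    rcases het t ht with ⟨h1, h2⟩ | ⟨h1, h2⟩ <;> rw [h1, h2]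
    · exact hkey2core t ht t' ht' htne
    · rw [add_comm]; exact hkey2core t ht t' ht' htne
  -- flip property
  have hflip : ∀ t ∈ ts, ∀ ω : {e : Fin n × Fin n // e.1 < e.2} → Bool,
      ¬(Function.update ω (er t) true ∈ EV t ∧ Function.update ω (er t) false ∈ EV t) := by
    intro t ht ω hcon
    rw [hEV] at hcon
    simp only [Set.mem_setOf_eq] at hcon
    obtain ⟨⟨z1, hz1⟩, ⟨z2, hz2⟩⟩ := hcon
    rw [entry_update] at hz1 hz2
    simp only [eq_self_iff_true, if_true, Bool.false_eq_true, if_false] at hz1 hz2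
    have hcoeff : Q (er t).1.1 t.1 * Q (er t).1.2 t.2 + Q (er t).1.2 t.1 * Q (er t).1.1 t.2
        = ((z1 - z2 : ℤ) : ℚ) := by
      push_cast
      linear_combination hz1 - hz2
    exact ne_int_of_den_ne_one _ (hkey1 t ht) (z1 - z2) hcoeff
  -- invariance property
  have hinv : ∀ t ∈ ts, ∀ t' ∈ ts, t' ≠ t →
      ∀ (ω : {e : Fin n × Fin n // e.1 < e.2} → Bool) (b),
      Function.update ω (er t) b ∈ EV t' ↔ ω ∈ EV t' := by
    intro t ht t' ht' htne ω b
    rw [hEV]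
    simp only [Set.mem_setOf_eq]
    constructor
    · rintro ⟨z, hz⟩
      rw [entry_update, hkey2 t ht t' ht' htne, mul_zero, add_zero] at hz
      exact ⟨z, hz⟩
    · rintro ⟨z, hz⟩
      exact ⟨z, by rw [entry_update, hkey2 t ht t' ht' htne, mul_zero, add_zero]; exact hz⟩
  -- weights
  set w : Bool → ℝ≥0∞ := fun b => if b then ENNReal.ofReal p else ENNReal.ofReal (1-p)
    with hwdef
  have hw : ∀ b, w b ≤ c := by
    intro b
    rw [hwdef, hcdef]
    cases b
    · simp only [Bool.false_eq_true, if_false]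
      exact ENNReal.ofReal_le_ofReal (le_max_right _ _)
    · simp only [if_true]
      exact ENNReal.ofReal_le_ofReal (le_max_left _ _)
  have hwsum : w true + w false = 1 := by
    rw [hwdef]
    simp only [if_true, Bool.false_eq_true, if_false]
    rw [← ENNReal.ofReal_add hp0.le (by linarith)]
    norm_num
  have hνb : ∀ b : Bool, ν {b} = w b := by
    intro b
    rw [hνdef, PMF.toMeasure_apply_singleton _ _ (measurableSet_singleton b), hwdef]
    cases b
    · show (PMF.bernoulli _ _) false = _
      rw [PMF.bernoulli_apply]
      simp only [Bool.cond_false, Bool.false_eq_true, if_false]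
      rw [ENNReal.ofReal_sub 1 hp0.le, ENNReal.ofReal_one, ENNReal.coe_sub, ENNReal.coe_one]
      rfl
    · show (PMF.bernoulli _ _) true = _
      rw [PMF.bernoulli_apply]
      simp only [Bool.cond_true, if_true]
      rfl
  -- the event is contained in the intersection event
  have hEsub : {ω | ∀ i j : Fin n, ∃ z : ℤ, (Q.transpose * adjMat n ω * Q) i j = (z:ℚ)}
      ⊆ {ω' | ∀ t ∈ ts, ω' ∈ EV t} := by
    intro ω hω t _
    rw [hEV]
    exact hω t.1 t.2
  have hone : ∑ ω : {e : Fin n × Fin n // e.1 < e.2} → Bool, ∏ i, w (ω i) = 1 := by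
    have h1 := measure_pi_eq_sum (ι := {e : Fin n × Fin n // e.1 < e.2}) ν Set.univ
    rw [measure_univ] at h1
    simp only [Set.indicator_univ] at h1
    rw [Finset.sum_congr rfl
      (fun ω _ => Finset.prod_congr rfl (fun i _ => (hνb (ω i))))] at h1
    exact h1.symm
  -- cardinality bound on the exponent
  have hMle : m * (m + (n:ℝ) - (s:ℝ) - 1) ≤ (ts.card : ℝ) := by
    rw [htscard]
    rw [Nat.cast_mul, Nat.cast_add, Nat.cast_sub ha1, Nat.cast_sub hs, Nat.cast_one]
    have h2 : m + (n:ℝ) - (s:ℝ) - 1 ≤ ((a:ℝ) - 1) + ((n:ℝ) - (s:ℝ)) := by linarith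
    have h3 : m * (m + (n:ℝ) - (s:ℝ) - 1) ≤ (a:ℝ) * (((a:ℝ) - 1) + ((n:ℝ) - (s:ℝ))) :=
      mul_le_mul hma h2 (le_of_lt hfac2) (by positivity)
    linarith
  -- final chain
  calc (Measure.pi fun _ : {e : Fin n × Fin n // e.1 < e.2} => ν)
        {ω | ∀ i j : Fin n, ∃ z : ℤ, (Q.transpose * adjMat n ω * Q) i j = (z : ℚ)}
      ≤ (Measure.pi fun _ : {e : Fin n × Fin n // e.1 < e.2} => ν)
          {ω' | ∀ t ∈ ts, ω' ∈ EV t} := measure_mono hEsub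
    _ = ∑ ω : {e : Fin n × Fin n // e.1 < e.2} → Bool,
          Set.indicator {ω' | ∀ t ∈ ts, ω' ∈ EV t} (fun ω' => ∏ i, ν {ω' i}) ω :=
        measure_pi_eq_sum ν _
    _ = ∑ ω : {e : Fin n × Fin n // e.1 < e.2} → Bool,
          Set.indicator {ω' | ∀ t ∈ ts, ω' ∈ EV t} (fun ω' => ∏ i, w (ω' i)) ω := by
        refine Finset.sum_congr rfl fun ω _ => ?_
        congr 1
        funext ω'
        exact Finset.prod_congr rfl fun i _ => hνb (ω' i)
    _ ≤ c ^ ts.card * ∑ ω : {e : Fin n × Fin n // e.1 < e.2} → Bool, ∏ i, w (ω i) :=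
        core w c hw hwsum ts EV er hflip hinv
    _ = c ^ ts.card := by rw [hone, mul_one]
    _ = c ^ ((ts.card : ℕ) : ℝ) := (ENNReal.rpow_natCast c ts.card).symm
    _ ≤ c ^ (m * (m + (n:ℝ) - (s:ℝ) - 1)) :=
        ENNReal.rpow_le_rpow_of_exponent_ge hc1 hMle
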